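/- Let G be a finite group with subgroups A, B, M satisfying conditions (1)–(4) of the soft plane construction. Then AM = G \ (A·(B\A)·A), that is, the subgroup AM is exactly the complement in G of the set of products a₁ b a₂ with a₁, a₂ ∈ A and b ∈ B \ A. -/
import Mathlib


open scoped Pointwise

private lemma card_le_mul_of_fiber_le {X Y : Type*} [Finite X] [Finite Y] (f : X → Y) (m : ℕ)
    (h : ∀ y, Nat.card {x // f x = y} ≤ m) : Nat.card X ≤ Nat.card Y * m := by
  classical
  have := Fintype.ofFinite X
  have := Fintype.ofFinite Y
  rw [Nat.card_eq_fintype_card, Nat.card_eq_fintype_card,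
    ← Fintype.card_congr (Equiv.sigmaFiberEquiv f), Fintype.card_sigma]
  calc ∑ y, Fintype.card {x // f x = y} ≤ ∑ _y : Y, m :=
        Finset.sum_le_sum fun y _ => by rw [← Nat.card_eq_fintype_card]; exact h y
    _ = Fintype.card Y * m := by simp [Finset.sum_const, mul_comm]

private lemma mul_le_card_of_le_fiber {X Y : Type*} [Finite X] [Finite Y] (f : X → Y) (m : ℕ)
    (h : ∀ y, m ≤ Nat.card {x // f x = y}) : Nat.card Y * m ≤ Nat.card X := by
  classical
  have := Fintype.ofFinite X
  have := Fintype.ofFinite Y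
  rw [Nat.card_eq_fintype_card, Nat.card_eq_fintype_card,
    ← Fintype.card_congr (Equiv.sigmaFiberEquiv f), Fintype.card_sigma]
  calc Fintype.card Y * m = ∑ _y : Y, m := by simp [Finset.sum_const, mul_comm]
    _ ≤ ∑ y, Fintype.card {x // f x = y} :=
        Finset.sum_le_sum fun y _ => by rw [← Nat.card_eq_fintype_card]; exact h y

/-- Under conditions (1)–(4), `AM = G \ (A·(B\A)·A)`. -/
theorem stmt7 {G : Type*} [Group G] [Finite G]
    (A B M AM BM : Subgroup G) (n k : ℕ) (hn : 1 < n)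
    (hk : k = Nat.card (A ⊓ B : Subgroup G))
    (hA : Nat.card A = n * k) (hB : Nat.card B = n * k) (hM : Nat.card M = n * k)
    (hG : Nat.card G = n ^ 3 * k)
    (hAM : (AM : Set G) = (A : Set G) * (M : Set G))
    (hBM : (BM : Set G) = (B : Set G) * (M : Set G))
    (hAMcard : Nat.card AM = n ^ 2 * k) (hBMcard : Nat.card BM = n ^ 2 * k)
    (h3 : ∀ g : G, ∃ a ∈ A, ∃ m ∈ M, ∃ b ∈ B, g = a * m * b)
    (h4 : ((A : Set G) * (B : Set G)) ∩ ((B : Set G) * (A : Set G)) =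
      (A : Set G) ∪ (B : Set G)) :
    (AM : Set G) =
      Set.univ \ ((A : Set G) * (((B : Set G) \ (A : Set G))) * (A : Set G)) := by
  classical
  have hk0 : 0 < k := hk ▸ Nat.card_pos
  have hn0 : 0 < n := by omega
  -- A ≤ AM and M ≤ AM
  have hA_AM : A ≤ AM := by
    intro a ha
    have : a ∈ (AM : Set G) := by
      rw [hAM]
      simpa using Set.mul_mem_mul (by exact ha : a ∈ (A : Set G)) (M.one_mem : (1:G) ∈ (M : Set G))
    exact this
  -- AM * B = univ
  have hprodU : (AM : Set G) * (B : Set G) = Set.univ := by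
    apply Set.eq_univ_of_forall
    intro g
    obtain ⟨a, ha, m, hm, b, hb, rfl⟩ := h3 g
    refine Set.mem_mul.2 ⟨a * m, ?_, b, hb, rfl⟩
    rw [hAM]; exact Set.mul_mem_mul ha hm
  have hcuniv : Nat.card ↥(Set.univ : Set G) = Nat.card G := by
    rw [Nat.card_coe_set_eq, Set.ncard_univ]
  -- |AM ⊓ B| ≤ k
  have hcard_AMB : Nat.card (AM ⊓ B : Subgroup G) ≤ k := by
    set m := Nat.card (AM ⊓ B : Subgroup G) with hm'
    have key : Nat.card ↥((AM : Set G) * (B : Set G)) * m ≤ Nat.card (↥AM × ↥B) := by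
      apply mul_le_card_of_le_fiber
        (f := fun p : ↥AM × ↥B =>
          (⟨(p.1 : G) * (p.2 : G),
            Set.mul_mem_mul p.1.2 p.2.2⟩ : ↥((AM : Set G) * (B : Set G))))
      intro y
      obtain ⟨x, hx, z, hz, hxz⟩ := Set.mem_mul.1 y.2
      have hinj : Function.Injective (fun d : ↥(AM ⊓ B : Subgroup G) =>
          (⟨(⟨x * (d : G), AM.mul_mem hx ((Subgroup.mem_inf.1 d.2).1)⟩,
             ⟨(d : G)⁻¹ * z, B.mul_mem (B.inv_mem ((Subgroup.mem_inf.1 d.2).2)) hz⟩),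
            by
              apply Subtype.ext
              show x * (d : G) * ((d : G)⁻¹ * z) = (y : G)
              rw [← hxz]; group⟩ :
            {p : ↥AM × ↥B // (⟨(p.1 : G) * (p.2 : G),
              Set.mul_mem_mul p.1.2 p.2.2⟩ : ↥((AM : Set G) * (B : Set G))) = y})) := by
        intro d d' hdd'
        have h1 : x * (d : G) = x * (d' : G) := by
          have := congrArg (fun w => ((w.1.1 : G))) hdd'
          simpa using this
        exact Subtype.ext (mul_left_cancel h1)
      exact Nat.card_le_card_of_injective _ hinj
    rw [hprodU, hcuniv, hG, Nat.card_prod, hAMcard, hB] at key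
    have key2 : n ^ 3 * k * m ≤ n ^ 3 * k * k := by
      calc n ^ 3 * k * m ≤ n ^ 2 * k * (n * k) := key
        _ = n ^ 3 * k * k := by ring
    exact Nat.le_of_mul_le_mul_left key2 (by positivity)
  -- AM ⊓ B = A ⊓ B, hence AM ∩ B ⊆ A
  have hAB_eq : (A ⊓ B : Subgroup G) = AM ⊓ B :=
    Subgroup.eq_of_le_of_card_ge (inf_le_inf_right B hA_AM) (hk ▸ hcard_AMB)
  have hmemA : ∀ x : G, x ∈ AM → x ∈ B → x ∈ A := by
    intro x h1 h2
    have : x ∈ AM ⊓ B := Subgroup.mem_inf.2 ⟨h1, h2⟩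
    rw [← hAB_eq] at this
    exact (Subgroup.mem_inf.1 this).1
  set D : Set G := (B : Set G) \ (A : Set G) with hD
  set S : Set G := (A : Set G) * D * (A : Set G) with hS
  -- disjointness of S and AM
  have hdisj : ∀ x ∈ S, x ∉ (AM : Set G) := by
    rintro x hx hxAM
    obtain ⟨u, hu, a₂, ha₂, rfl⟩ := Set.mem_mul.1 hx
    obtain ⟨a₁, ha₁, b, hb, rfl⟩ := Set.mem_mul.1 hu
    have hbAM : b ∈ AM := by
      have h1 : a₁ ∈ AM := hA_AM ha₁
      have h2 : a₂ ∈ AM := hA_AM ha₂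
      have hx' : a₁ * b * a₂ ∈ AM := hxAM
      have hb' : b = a₁⁻¹ * (a₁ * b * a₂) * a₂⁻¹ := by group
      rw [hb']
      exact AM.mul_mem (AM.mul_mem (AM.inv_mem h1) hx') (AM.inv_mem h2)
    exact hb.2 (hmemA b hbAM hb.1)
  -- cardinalities of coercions
  have hcA : Nat.card ↥(A : Set G) = n * k := hA
  have hcD : Nat.card ↥D = n * k - k := by
    rw [Nat.card_coe_set_eq, hD, ← Set.diff_inter_self_eq_diff,
      Set.ncard_diff Set.inter_subset_right]
    have e1 : ((B : Set G)).ncard = n * k := by rw [← Nat.card_coe_set_eq]; exact hB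
    have e2 : ((A : Set G) ∩ (B : Set G)).ncard = k := by
      rw [← Subgroup.coe_inf, ← Nat.card_coe_set_eq]
      exact hk.symm
    rw [e1, e2]
  -- lower bound for |S|
  have hScard : n ^ 2 * (n - 1) * k ≤ Nat.card ↥S := by
    have hfib : ∀ y : ↥S,
        Nat.card {p : ↥(A : Set G) × ↥D × ↥(A : Set G) //
          (⟨(p.1 : G) * (p.2.1 : G) * (p.2.2 : G),
            Set.mul_mem_mul (Set.mul_mem_mul p.1.2 p.2.1.2) p.2.2.2⟩ : ↥S) = y} ≤ k * k := by
      intro y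
      obtain ⟨u, hu, a₂, ha₂, hprodeq⟩ := Set.mem_mul.1 y.2
      obtain ⟨a₁, ha₁, b, hb, rfl⟩ := Set.mem_mul.1 hu
      -- hprodeq : a₁ * b * a₂ = ↑y
      have main : ∀ p : {p : ↥(A : Set G) × ↥D × ↥(A : Set G) //
          (⟨(p.1 : G) * (p.2.1 : G) * (p.2.2 : G),
            Set.mul_mem_mul (Set.mul_mem_mul p.1.2 p.2.1.2) p.2.2.2⟩ : ↥S) = y},
          ((p.1.1 : G)⁻¹ * a₁ ∈ A ⊓ B) ∧ (a₂ * (p.1.2.2 : G)⁻¹ ∈ A ⊓ B) := by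
        rintro ⟨⟨⟨a₁', ha₁'⟩, ⟨b', hb'⟩, ⟨a₂', ha₂'⟩⟩, hp⟩
        have hE : a₁' * b' * a₂' = a₁ * b * a₂ := by
          have := congrArg Subtype.val hp
          simpa [hprodeq] using this
        have hbB : b ∈ B := hb.1
        have hbA : b ∉ A := hb.2
        constructor
        · -- α := a₁'⁻¹ * a₁ ∈ A ⊓ B
          have hαA : a₁'⁻¹ * a₁ ∈ A := A.mul_mem (A.inv_mem ha₁') ha₁
          have hev : (a₁'⁻¹ * a₁) * b = b' * (a₂' * a₂⁻¹) := by
            have : (a₁'⁻¹ * a₁) * b = a₁'⁻¹ * (a₁ * b * a₂) * a₂⁻¹ := by group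
            rw [this, ← hE]; group
          have hmem : (a₁'⁻¹ * a₁) * b ∈ (A : Set G) ∪ (B : Set G) := by
            rw [← h4]
            refine ⟨Set.mul_mem_mul hαA hbB, ?_⟩
            rw [hev]
            exact Set.mul_mem_mul hb'.1 (A.mul_mem ha₂' (A.inv_mem ha₂))
          rcases hmem with hc | hc
          · have hbA' : b ∈ A := by
              have hbe : b = (a₁'⁻¹ * a₁)⁻¹ * ((a₁'⁻¹ * a₁) * b) := by group
              rw [hbe]; exact A.mul_mem (A.inv_mem hαA) hc
            exact absurd hbA' hbA
          · have : a₁'⁻¹ * a₁ ∈ B := by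
              have := B.mul_mem hc (B.inv_mem hbB)
              simpa using this
            exact Subgroup.mem_inf.2 ⟨hαA, this⟩
        · -- β := a₂ * a₂'⁻¹ ∈ A ⊓ B
          have hβA : a₂ * a₂'⁻¹ ∈ A := A.mul_mem ha₂ (A.inv_mem ha₂')
          have hev : b * (a₂ * a₂'⁻¹) = (a₁⁻¹ * a₁') * b' := by
            have : b * (a₂ * a₂'⁻¹) = a₁⁻¹ * (a₁ * b * a₂) * a₂'⁻¹ := by group
            rw [this, ← hE]; group
          have hmem : b * (a₂ * a₂'⁻¹) ∈ (A : Set G) ∪ (B : Set G) := by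
            rw [← h4]
            refine ⟨?_, Set.mul_mem_mul hbB hβA⟩
            rw [hev]
            exact Set.mul_mem_mul (A.mul_mem (A.inv_mem ha₁) ha₁') hb'.1
          rcases hmem with hc | hc
          · have hbA' : b ∈ A := by
              have hbe : b = (b * (a₂ * a₂'⁻¹)) * (a₂ * a₂'⁻¹)⁻¹ := by group
              rw [hbe]; exact A.mul_mem hc (A.inv_mem hβA)
            exact absurd hbA' hbA
          · have : a₂ * a₂'⁻¹ ∈ B := by
              have := B.mul_mem (B.inv_mem hbB) hc
              simpa using this
            exact Subgroup.mem_inf.2 ⟨hβA, this⟩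
      have hinj : Function.Injective (fun p : {p : ↥(A : Set G) × ↥D × ↥(A : Set G) //
          (⟨(p.1 : G) * (p.2.1 : G) * (p.2.2 : G),
            Set.mul_mem_mul (Set.mul_mem_mul p.1.2 p.2.1.2) p.2.2.2⟩ : ↥S) = y} =>
          ((⟨(p.1.1 : G)⁻¹ * a₁, (main p).1⟩, ⟨a₂ * (p.1.2.2 : G)⁻¹, (main p).2⟩) :
            ↥(A ⊓ B : Subgroup G) × ↥(A ⊓ B : Subgroup G))) := by
        intro p q hpq
        have e1 : (p.1.1 : G)⁻¹ * a₁ = (q.1.1 : G)⁻¹ * a₁ := by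
          have := congrArg (fun w => ((w.1 : G))) hpq
          simpa using this
        have e2 : a₂ * (p.1.2.2 : G)⁻¹ = a₂ * (q.1.2.2 : G)⁻¹ := by
          have := congrArg (fun w => ((w.2 : G))) hpq
          simpa using this
        have h1 : (p.1.1 : G) = (q.1.1 : G) := by
          have := mul_right_cancel e1
          exact inv_injective this
        have h3' : (p.1.2.2 : G) = (q.1.2.2 : G) := by
          have := mul_left_cancel e2
          exact inv_injective this
        have hpv : (p.1.1 : G) * (p.1.2.1 : G) * (p.1.2.2 : G) = (y : G) :=
          congrArg Subtype.val p.2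
        have hqv : (q.1.1 : G) * (q.1.2.1 : G) * (q.1.2.2 : G) = (y : G) :=
          congrArg Subtype.val q.2
        have h2 : (p.1.2.1 : G) = (q.1.2.1 : G) := by
          have : (p.1.1 : G) * (p.1.2.1 : G) * (p.1.2.2 : G) =
              (q.1.1 : G) * (q.1.2.1 : G) * (q.1.2.2 : G) := by rw [hpv, hqv]
          rw [h1, h3'] at this
          exact mul_left_cancel (mul_right_cancel this)
        apply Subtype.ext
        exact Prod.ext (Subtype.ext h1) (Prod.ext (Subtype.ext h2) (Subtype.ext h3'))
      calc Nat.card _ ≤ Nat.card (↥(A ⊓ B : Subgroup G) × ↥(A ⊓ B : Subgroup G)) :=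
            Nat.card_le_card_of_injective _ hinj
        _ = k * k := by rw [Nat.card_prod, ← hk]
    have key := card_le_mul_of_fiber_le
      (f := fun p : ↥(A : Set G) × ↥D × ↥(A : Set G) =>
        (⟨(p.1 : G) * (p.2.1 : G) * (p.2.2 : G),
          Set.mul_mem_mul (Set.mul_mem_mul p.1.2 p.2.1.2) p.2.2.2⟩ : ↥S)) (k * k) hfib
    rw [Nat.card_prod, Nat.card_prod, hcA, hcD] at key
    have hsubk : n * k - k = (n - 1) * k := by rw [Nat.sub_mul, one_mul]
    rw [hsubk] at key
    have key2 : n ^ 2 * (n - 1) * k * (k * k) ≤ Nat.card ↥S * (k * k) := by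
      calc n ^ 2 * (n - 1) * k * (k * k) = n * k * ((n - 1) * k * (n * k)) := by ring
        _ ≤ Nat.card ↥S * (k * k) := key
    exact Nat.le_of_mul_le_mul_right key2 (by positivity)
  -- finish by cardinality
  have hsub : (AM : Set G) ⊆ Set.univ \ S := by
    intro x hx
    exact ⟨trivial, fun hxS => hdisj x hxS hx⟩
  apply Set.eq_of_subset_of_ncard_le hsub ?_ (Set.toFinite _)
  have h1 : (AM : Set G).ncard = n ^ 2 * k := by
    rw [← Nat.card_coe_set_eq]; exact hAMcard
  rw [Set.ncard_diff (Set.subset_univ S), Set.ncard_univ, hG, h1]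
  have h2 : n ^ 2 * (n - 1) * k ≤ S.ncard := by
    rw [← Nat.card_coe_set_eq]; exact hScard
  have h3 : n ^ 3 * k = n ^ 2 * k + n ^ 2 * (n - 1) * k := by
    obtain ⟨m, rfl⟩ : ∃ m, n = m + 1 := ⟨n - 1, by omega⟩
    simp only [Nat.add_sub_cancel]
    ring
  rw [h3]
  exact le_trans (Nat.sub_le_sub_left h2 _) (by rw [Nat.add_sub_cancel])
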